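/- Let T be a countable tree with ω levels, all finite and nonempty, with no leaves, such that T is balanced (any two nodes on the same level have the same number of immediate successors) and infinitely many levels have branching number at least 2. Let G be the group of level-preserving automorphisms of T. Then for every finite A ⊆ T, there is no infinite branch B of T such that every g ∈ G fixing A pointwise maps B to itself setwise... equivalently: for every finite A ⊆ T there exist two distinct infinite branches agreeing with each other above A that are interchanged by an element of G fixing A pointwise; hence no infinite branch is definable from finitely many parameters. -/
import Mathlib


/-- A well-founded tree order of height at most ω: a partial order with a least
element (root) in which the set of predecessors of every element is finite and
linearly ordered. -/
structure TreeOrder (T : Type*) where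
  le : T → T → Prop
  refl : ∀ x, le x x
  antisymm : ∀ x y, le x y → le y x → x = y
  trans : ∀ x y z, le x y → le y z → le x z
  root : T
  root_le : ∀ x, le root x
  pred_finite : ∀ x, {y | le y x}.Finite
  pred_chain : ∀ x y z, le y x → le z x → le y z ∨ le z y

namespace TreeOrder

variable {T : Type*} (t : TreeOrder T)

/-- The strict order associated to a tree order. -/
def lt (x y : T) : Prop := t.le x y ∧ x ≠ y

/-- The `n`-th level: elements with exactly `n` strict predecessors. -/
def level (n : ℕ) : Set T := {x | {y | t.lt y x}.ncard = n}

/-- The tree has ω levels: every level is nonempty. -/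
def OmegaLevels : Prop := ∀ n, (t.level n).Nonempty

/-- All levels are finite. -/
def FiniteLevels : Prop := ∀ n, (t.level n).Finite

/-- No leaves: every element has a strict successor. -/
def NoLeaves : Prop := ∀ x, ∃ y, t.lt x y

/-- `y` is an immediate successor of `x`. -/
def ImmSucc (x y : T) : Prop := t.lt x y ∧ ¬ ∃ z, t.lt x z ∧ t.lt z y

/-- Union of the first `n` levels. -/
def below (n : ℕ) : Set T := {x | ∃ k < n, x ∈ t.level k}

end TreeOrder

namespace TAux
open TreeOrder Function
variable {T : Type*} (t : TreeOrder T)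

noncomputable def lev (x : T) : ℕ := {y | t.lt y x}.ncard

lemma mem_level {x : T} {n : ℕ} : x ∈ t.level n ↔ lev t x = n := Iff.rfl

lemma preds_finite (x : T) : {y | t.lt y x}.Finite :=
  (t.pred_finite x).subset (fun _ hy => hy.1)

lemma sub_preds {x y : T} (h : t.le y x) : {z | t.lt z y} ⊆ {z | t.lt z x} := by
  intro z hz
  refine ⟨t.trans _ _ _ hz.1 h, ?_⟩
  rintro rfl
  exact hz.2 (t.antisymm _ _ hz.1 h)

lemma lev_mono {x y : T} (h : t.le y x) : lev t y ≤ lev t x :=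
  Set.ncard_le_ncard (sub_preds t h) (preds_finite t x)

lemma lev_strict {x y : T} (h : t.lt x y) : lev t x < lev t y := by
  have hsub : insert x {z | t.lt z x} ⊆ {z | t.lt z y} := by
    intro z hz
    rcases hz with rfl | hz
    · exact h
    · exact sub_preds t h.1 hz
  have hx : x ∉ {z | t.lt z x} := fun hx => hx.2 rfl
  have h1 : lev t x + 1 ≤ lev t y := by
    calc lev t x + 1 = (insert x {z | t.lt z x}).ncard :=
          (Set.ncard_insert_of_notMem hx (preds_finite t x)).symm
      _ ≤ lev t y := Set.ncard_le_ncard hsub (preds_finite t y)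
  omega

lemma eq_of_le_lev {x y : T} (h : t.le x y) (hl : lev t x = lev t y) : x = y := by
  by_contra hne
  exact absurd hl (Nat.ne_of_lt (lev_strict t ⟨h, hne⟩))

lemma le_of_comp_lev {x y z : T} (hx : t.le x z) (hy : t.le y z)
    (hl : lev t x ≤ lev t y) : t.le x y := by
  rcases t.pred_chain z x y hx hy with h | h
  · exact h
  · have h2 : y = x := eq_of_le_lev t h (le_antisymm (lev_mono t h) hl)
    exact h2 ▸ t.refl _

lemma exists_pred_lev (x : T) : ∀ k ≤ lev t x, ∃ y, t.le y x ∧ lev t y = k := by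
  intro k hk
  have hSeq : {y | t.le y x} = insert x {y | t.lt y x} := by
    ext y
    simp only [Set.mem_setOf_eq, Set.mem_insert_iff]
    constructor
    · intro h
      by_cases hy : y = x
      · exact Or.inl hy
      · exact Or.inr ⟨h, hy⟩
    · rintro (rfl | h)
      · exact t.refl _
      · exact h.1
  have hx : x ∉ {z | t.lt z x} := fun hx => hx.2 rfl
  have hScard : {y | t.le y x}.ncard = lev t x + 1 := by
    rw [hSeq, Set.ncard_insert_of_notMem hx (preds_finite t x)]; rfl
  have hinj : Set.InjOn (lev t) {y | t.le y x} := by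
    intro a ha b hb hab
    rcases t.pred_chain x a b ha hb with h | h
    · exact eq_of_le_lev t h hab
    · exact (eq_of_le_lev t h hab.symm).symm
  have hsub : (lev t) '' {y | t.le y x} ⊆ ↑(Finset.Iic (lev t x)) := by
    rintro m ⟨y, hy, rfl⟩
    simp only [Finset.coe_Iic, Set.mem_Iic]
    exact lev_mono t hy
  have heq : (lev t) '' {y | t.le y x} = ↑(Finset.Iic (lev t x)) := by
    exact Set.eq_of_subset_of_ncard_le hsub
      (by rw [Set.ncard_coe_finset, Nat.card_Iic,
        Set.ncard_image_of_injOn hinj, hScard])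
      ((Finset.Iic (lev t x)).finite_toSet)
  have hkmem : k ∈ (lev t) '' {y | t.le y x} := by
    rw [heq]; simpa using hk
  obtain ⟨y, hy, rfl⟩ := hkmem
  exact ⟨y, hy, rfl⟩

noncomputable def par (x : T) : T :=
  (exists_pred_lev t x (lev t x - 1) (Nat.sub_le _ _)).choose

lemma par_le (x : T) : t.le (par t x) x :=
  (exists_pred_lev t x (lev t x - 1) (Nat.sub_le _ _)).choose_spec.1

lemma lev_par (x : T) : lev t (par t x) = lev t x - 1 :=
  (exists_pred_lev t x (lev t x - 1) (Nat.sub_le _ _)).choose_spec.2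

lemma par_lt {x : T} (h : lev t x ≠ 0) : t.lt (par t x) x := by
  refine ⟨par_le t x, fun e => ?_⟩
  have := lev_par t x
  rw [e] at this
  omega

lemma le_par {x q : T} (hq : t.lt q x) : t.le q (par t x) := by
  have h1 : lev t q < lev t x := lev_strict t hq
  exact le_of_comp_lev t hq.1 (par_le t x) (by rw [lev_par t x]; omega)

lemma immSucc_par {x : T} (h : lev t x ≠ 0) : t.ImmSucc (par t x) x := by
  refine ⟨par_lt t h, ?_⟩
  rintro ⟨z, h1, h2⟩
  have := lev_strict t h1
  have := lev_strict t h2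
  have := lev_par t x
  omega

lemma lev_of_immSucc {p x : T} (h : t.ImmSucc p x) : lev t x = lev t p + 1 := by
  have h1 : lev t p < lev t x := lev_strict t h.1
  by_contra hne
  obtain ⟨y, hy, hyl⟩ := exists_pred_lev t x (lev t p + 1) (by omega)
  have hyx : t.lt y x := ⟨hy, by rintro rfl; omega⟩
  have hpy : t.le p y := le_of_comp_lev t h.1.1 hy (by omega)
  exact h.2 ⟨y, ⟨hpy, by rintro rfl; omega⟩, hyx⟩

lemma par_eq {p x : T} (h : t.ImmSucc p x) : par t x = p := by
  have hl := lev_of_immSucc t h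
  have h0 : lev t x ≠ 0 := by omega
  have h1 : t.le p (par t x) := le_par t h.1
  have h2 : lev t (par t x) = lev t p := by rw [lev_par t x]; omega
  exact (eq_of_le_lev t h1 (h2.symm)).symm

lemma children_finite (hf : t.FiniteLevels) (a : T) : {z | t.ImmSucc a z}.Finite :=
  (hf (lev t a + 1)).subset fun z hz => by
    have := lev_of_immSucc t hz
    exact this


attribute [local instance] Classical.propDecidable

variable (hbal : ∀ n, ∀ x ∈ t.level n, ∀ y ∈ t.level n,
    {z | t.ImmSucc x z}.ncard = {z | t.ImmSucc y z}.ncard)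
  (hf : t.FiniteLevels)

noncomputable def chEquiv (a b : T) (h : lev t a = lev t b) :
    ↥{z | t.ImmSucc a z} ≃ ↥{z | t.ImmSucc b z} := by
  have ha : a ∈ t.level (lev t a) := rfl
  have hb : b ∈ t.level (lev t a) := h.symm
  have hcard := hbal (lev t a) a ha b hb
  have f1 := (children_finite t hf a).to_subtype
  have f2 := (children_finite t hf b).to_subtype
  refine Classical.choice (Finite.card_eq.mp ?_)
  rw [Nat.card_coe_set_eq, Nat.card_coe_set_eq]
  exact hcard

noncomputable def sym (e : T → ℕ) (a b : T) (h : lev t a = lev t b) :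
    ↥{z | t.ImmSucc a z} ≃ ↥{z | t.ImmSucc b z} :=
  if hab : a = b then hab ▸ Equiv.refl _
  else if e a < e b then chEquiv t hbal hf a b h
  else (chEquiv t hbal hf b a h.symm).symm

lemma sym_symm (e : T → ℕ) (he : Injective e) (a b : T) (h : lev t a = lev t b) :
    sym t hbal hf e b a h.symm = (sym t hbal hf e a b h).symm := by
  by_cases hab : a = b
  · subst hab
    simp [sym]
  · have hab' : ¬ b = a := fun hh => hab hh.symm
    rcases lt_trichotomy (e a) (e b) with hlt | heq | hgt
    · have h1 : ¬ e b < e a := by omega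
      simp only [sym, dif_neg hab, dif_neg hab', if_pos hlt, if_neg h1]
    · exact absurd (he heq) hab
    · have h1 : ¬ e a < e b := by omega
      simp only [sym, dif_neg hab, dif_neg hab', if_pos hgt, if_neg h1,
        Equiv.symm_symm]

noncomputable def psi (e : T → ℕ) (a b z : T) : T :=
  if h : lev t a = lev t b ∧ t.ImmSucc a z then
    ((sym t hbal hf e a b h.1) ⟨z, h.2⟩ : T)
  else z

lemma psi_immSucc (e : T → ℕ) {a b z : T} (h : lev t a = lev t b)
    (hz : t.ImmSucc a z) :
    t.ImmSucc b (psi t hbal hf e a b z) := by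
  rw [psi, dif_pos ⟨h, hz⟩]
  exact ((sym t hbal hf e a b h) ⟨z, hz⟩).2

lemma psi_psi (e : T → ℕ) (he : Injective e) {a b z : T}
    (h : lev t a = lev t b) (hz : t.ImmSucc a z) :
    psi t hbal hf e b a (psi t hbal hf e a b z) = z := by
  have h1 : t.ImmSucc b (psi t hbal hf e a b z) := psi_immSucc t hbal hf e h hz
  rw [psi, dif_pos ⟨h.symm, h1⟩]
  have h2 : (⟨psi t hbal hf e a b z, h1⟩ : ↥{z | t.ImmSucc b z})
      = (sym t hbal hf e a b h) ⟨z, hz⟩ := by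
    apply Subtype.ext
    show psi t hbal hf e a b z = _
    rw [psi, dif_pos ⟨h, hz⟩]
  rw [h2, sym_symm t hbal hf e he a b h, Equiv.symm_apply_apply]

noncomputable def F (e : T → ℕ) (c c' : T) (z : T) : T :=
  if z = c then c'
  else if z = c' then c
  else if hs : t.le c z ∨ t.le c' z then
    psi t hbal hf e (par t z) (F e c c' (par t z)) z
  else z
termination_by lev t z
decreasing_by
  have h0 : lev t z ≠ 0 := by
    rcases hs with h | h
    · have := lev_strict t (⟨h, fun hh => by simp_all⟩ : t.lt c z)
      omega
    · have := lev_strict t (⟨h, fun hh => by simp_all⟩ : t.lt c' z)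
      omega
  have := lev_par t z
  omega

lemma F_eq_c (e : T → ℕ) (c c' : T) : F t hbal hf e c c' c = c' := by
  rw [F, if_pos rfl]

lemma F_eq_c' (e : T → ℕ) {c c' : T} (hcc : c ≠ c') : F t hbal hf e c c' c' = c := by
  rw [F, if_neg (fun h => hcc h.symm), if_pos rfl]

lemma F_fix (e : T → ℕ) {c c' z : T} (h1 : ¬ t.le c z) (h2 : ¬ t.le c' z) :
    F t hbal hf e c c' z = z := by
  have hz1 : z ≠ c := by rintro rfl; exact h1 (t.refl _)
  have hz2 : z ≠ c' := by rintro rfl; exact h2 (t.refl _)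
  rw [F, if_neg hz1, if_neg hz2, dif_neg (by tauto)]

lemma F_step (e : T → ℕ) {c c' z : T} (hs : t.le c z ∨ t.le c' z)
    (h1 : z ≠ c) (h2 : z ≠ c') :
    F t hbal hf e c c' z
      = psi t hbal hf e (par t z) (F t hbal hf e c c' (par t z)) z := by
  conv_lhs => rw [F]
  rw [if_neg h1, if_neg h2, dif_pos hs]

lemma master (e : T → ℕ) (he : Injective e) (c c' : T)
    (hc : lev t c = lev t c') (hcc : c ≠ c')
    (hnc : ¬ t.le c c') (hnc' : ¬ t.le c' c) :
    ∀ z, (t.le c z → t.le c' (F t hbal hf e c c' z)) ∧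
      (t.le c' z → t.le c (F t hbal hf e c c' z)) ∧
      lev t (F t hbal hf e c c' z) = lev t z ∧
      F t hbal hf e c c' (F t hbal hf e c c' z) = z ∧
      ((t.le c z ∨ t.le c' z) → z ≠ c → z ≠ c' →
        t.ImmSucc (F t hbal hf e c c' (par t z)) (F t hbal hf e c c' z)) := by
  have hdisj : ∀ z, t.le c z → t.le c' z → False := by
    intro z h1 h2
    rcases t.pred_chain z c c' h1 h2 with h | h
    · exact hnc h
    · exact hnc' h
  suffices H : ∀ n z, lev t z = n →
      (t.le c z → t.le c' (F t hbal hf e c c' z)) ∧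
      (t.le c' z → t.le c (F t hbal hf e c c' z)) ∧
      lev t (F t hbal hf e c c' z) = lev t z ∧
      F t hbal hf e c c' (F t hbal hf e c c' z) = z ∧
      ((t.le c z ∨ t.le c' z) → z ≠ c → z ≠ c' →
        t.ImmSucc (F t hbal hf e c c' (par t z)) (F t hbal hf e c c' z)) by
    exact fun z => H _ z rfl
  intro n
  induction n using Nat.strong_induction_on with
  | _ n IH =>
  intro z hzn
  subst hzn
  by_cases hzc : z = c
  · rw [hzc]
    have e1 : F t hbal hf e c c' c = c' := F_eq_c t hbal hf e c c'
    have e2 : F t hbal hf e c c' c' = c := F_eq_c' t hbal hf e hcc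
    refine ⟨fun _ => by rw [e1]; exact t.refl _, fun h => absurd h hnc', by rw [e1, hc],
      by rw [e1, e2], fun _ h _ => absurd rfl h⟩
  by_cases hzc' : z = c'
  · rw [hzc']
    have e1 : F t hbal hf e c c' c' = c := F_eq_c' t hbal hf e hcc
    have e2 : F t hbal hf e c c' c = c' := F_eq_c t hbal hf e c c'
    refine ⟨fun h => absurd h hnc, fun _ => by rw [e1]; exact t.refl _, by rw [e1, hc],
      by rw [e1, e2], fun _ _ h => absurd rfl h⟩
  by_cases hs : t.le c z ∨ t.le c' z
  · rcases hs with hle | hle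
    · -- z strictly above c
      have hlt : t.lt c z := ⟨hle, fun hh => hzc hh.symm⟩
      have hlz : lev t c < lev t z := lev_strict t hlt
      have hz0 : lev t z ≠ 0 := by omega
      have hpi : t.ImmSucc (par t z) z := immSucc_par t hz0
      have hcp : t.le c (par t z) := le_par t hlt
      have hlevp : lev t (par t z) < lev t z := by
        have := lev_par t z; omega
      obtain ⟨ih1, ih2, ih3, ih4, _⟩ := IH (lev t (par t z)) hlevp (par t z) rfl
      have hFp : t.le c' (F t hbal hf e c c' (par t z)) := ih1 hcp
      have hE : F t hbal hf e c c' z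
          = psi t hbal hf e (par t z) (F t hbal hf e c c' (par t z)) z :=
        F_step t hbal hf e (Or.inl hle) hzc hzc'
      have hIm : t.ImmSucc (F t hbal hf e c c' (par t z)) (F t hbal hf e c c' z) := by
        rw [hE]; exact psi_immSucc t hbal hf e ih3.symm hpi
      have hc'Fz : t.le c' (F t hbal hf e c c' z) := t.trans _ _ _ hFp hIm.1.1
      have hlev : lev t (F t hbal hf e c c' z) = lev t z := by
        rw [lev_of_immSucc t hIm, ih3, (lev_of_immSucc t hpi).symm]
      refine ⟨fun _ => hc'Fz, fun h => (hdisj z hle h).elim, hlev, ?_, fun _ _ _ => hIm⟩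
      have hFz_c : F t hbal hf e c c' z ≠ c := fun hh => hnc' (hh ▸ hc'Fz)
      have hFz_c' : F t hbal hf e c c' z ≠ c' := by
        intro hh
        rw [hh] at hlev
        omega
      have hE2 : F t hbal hf e c c' (F t hbal hf e c c' z)
          = psi t hbal hf e (par t (F t hbal hf e c c' z))
              (F t hbal hf e c c' (par t (F t hbal hf e c c' z)))
              (F t hbal hf e c c' z) :=
        F_step t hbal hf e (Or.inr hc'Fz) hFz_c hFz_c'
      have hparF : par t (F t hbal hf e c c' z) = F t hbal hf e c c' (par t z) :=
        par_eq t hIm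
      rw [hE2, hparF, ih4, hE]
      exact psi_psi t hbal hf e he ih3.symm hpi
    · -- z strictly above c'
      have hlt : t.lt c' z := ⟨hle, fun hh => hzc' hh.symm⟩
      have hlz : lev t c' < lev t z := lev_strict t hlt
      have hz0 : lev t z ≠ 0 := by omega
      have hpi : t.ImmSucc (par t z) z := immSucc_par t hz0
      have hcp : t.le c' (par t z) := le_par t hlt
      have hlevp : lev t (par t z) < lev t z := by
        have := lev_par t z; omega
      obtain ⟨ih1, ih2, ih3, ih4, _⟩ := IH (lev t (par t z)) hlevp (par t z) rfl
      have hFp : t.le c (F t hbal hf e c c' (par t z)) := ih2 hcp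
      have hE : F t hbal hf e c c' z
          = psi t hbal hf e (par t z) (F t hbal hf e c c' (par t z)) z :=
        F_step t hbal hf e (Or.inr hle) hzc hzc'
      have hIm : t.ImmSucc (F t hbal hf e c c' (par t z)) (F t hbal hf e c c' z) := by
        rw [hE]; exact psi_immSucc t hbal hf e ih3.symm hpi
      have hcFz : t.le c (F t hbal hf e c c' z) := t.trans _ _ _ hFp hIm.1.1
      have hlev : lev t (F t hbal hf e c c' z) = lev t z := by
        rw [lev_of_immSucc t hIm, ih3, (lev_of_immSucc t hpi).symm]
      refine ⟨fun h => (hdisj z h hle).elim, fun _ => hcFz, hlev, ?_, fun _ _ _ => hIm⟩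
      have hFz_c' : F t hbal hf e c c' z ≠ c' := fun hh => hnc (hh ▸ hcFz)
      have hFz_c : F t hbal hf e c c' z ≠ c := by
        intro hh
        rw [hh] at hlev
        omega
      have hE2 : F t hbal hf e c c' (F t hbal hf e c c' z)
          = psi t hbal hf e (par t (F t hbal hf e c c' z))
              (F t hbal hf e c c' (par t (F t hbal hf e c c' z)))
              (F t hbal hf e c c' z) :=
        F_step t hbal hf e (Or.inl hcFz) hFz_c hFz_c'
      have hparF : par t (F t hbal hf e c c' z) = F t hbal hf e c c' (par t z) :=
        par_eq t hIm
      rw [hE2, hparF, ih4, hE]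
      exact psi_psi t hbal hf e he ih3.symm hpi
  · push_neg at hs
    have hE : F t hbal hf e c c' z = z := F_fix t hbal hf e hs.1 hs.2
    exact ⟨fun h => absurd h hs.1, fun h => absurd h hs.2, by rw [hE],
      by rw [hE, hE], fun h _ _ => absurd h (by tauto)⟩

lemma F_mono (e : T → ℕ) (he : Injective e) (c c' : T)
    (hc : lev t c = lev t c') (hcc : c ≠ c')
    (hnc : ¬ t.le c c') (hnc' : ¬ t.le c' c)
    (hsib : ∀ x, t.lt x c → t.le x c') (hsib' : ∀ x, t.lt x c' → t.le x c) :
    ∀ y x, t.le x y → t.le (F t hbal hf e c c' x) (F t hbal hf e c c' y) := by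
  suffices H : ∀ n y, lev t y = n → ∀ x, t.le x y →
      t.le (F t hbal hf e c c' x) (F t hbal hf e c c' y) by
    exact fun y x h => H _ y rfl x h
  intro n
  induction n using Nat.strong_induction_on with
  | _ n IH =>
  intro y hyn x hxy
  subst hyn
  by_cases hxyeq : x = y
  · subst hxyeq; exact t.refl _
  have hlt : t.lt x y := ⟨hxy, hxyeq⟩
  have hy0 : lev t y ≠ 0 := by
    have := lev_strict t hlt; omega
  have hxp : t.le x (par t y) := le_par t hlt
  have hlevp : lev t (par t y) < lev t y := by
    have := lev_par t y; omega
  have IHp : t.le (F t hbal hf e c c' x) (F t hbal hf e c c' (par t y)) :=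
    IH (lev t (par t y)) hlevp (par t y) rfl x hxp
  by_cases hyc : y = c
  · rw [hyc] at hxy hlt ⊢
    -- x is strictly below c; F x = x
    have hncx : ¬ t.le c x := by
      intro h
      exact hlt.2 (t.antisymm _ _ hxy h)
    have hncx' : ¬ t.le c' x := by
      intro h
      exact hnc' (t.trans _ _ _ h hxy)
    have hFx : F t hbal hf e c c' x = x := F_fix t hbal hf e hncx hncx'
    rw [hFx, F_eq_c t hbal hf e c c']
    exact hsib x hlt
  by_cases hyc' : y = c'
  · rw [hyc'] at hxy hlt ⊢
    have hncx' : ¬ t.le c' x := by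
      intro h
      exact hlt.2 (t.antisymm _ _ hxy h)
    have hncx : ¬ t.le c x := by
      intro h
      exact hnc (t.trans _ _ _ h hxy)
    have hFx : F t hbal hf e c c' x = x := F_fix t hbal hf e hncx hncx'
    rw [hFx, F_eq_c' t hbal hf e hcc]
    exact hsib' x hlt
  by_cases hys : t.le c y ∨ t.le c' y
  · have hIm : t.ImmSucc (F t hbal hf e c c' (par t y)) (F t hbal hf e c c' y) :=
      (master t hbal hf e he c c' hc hcc hnc hnc' y).2.2.2.2 hys hyc hyc'
    exact t.trans _ _ _ IHp hIm.1.1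
  · push_neg at hys
    have hpc : ¬ t.le c (par t y) := fun h => hys.1 (t.trans _ _ _ h (par_le t y))
    have hpc' : ¬ t.le c' (par t y) := fun h => hys.2 (t.trans _ _ _ h (par_le t y))
    rw [F_fix t hbal hf e hys.1 hys.2]
    rw [F_fix t hbal hf e hpc hpc'] at IHp
    exact t.trans _ _ _ IHp (par_le t y)

end TAux


/-- In a countable balanced tree with ω finite levels, no leaves, and branching
at least 2 infinitely often, no infinite branch is definable from finitely many
parameters: for every finite A and every infinite branch B there is an
automorphism fixing A pointwise and moving B. -/


theorem stmt15 {T : Type*} [Countable T] (t : TreeOrder T)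
    (ho : t.OmegaLevels) (hf : t.FiniteLevels) (hnl : t.NoLeaves)
    (hbal : ∀ n, ∀ x ∈ t.level n, ∀ y ∈ t.level n,
      {z | t.ImmSucc x z}.ncard = {z | t.ImmSucc y z}.ncard)
    (hbr : ∀ N, ∃ n, N ≤ n ∧ ∃ x ∈ t.level n, 2 ≤ {z | t.ImmSucc x z}.ncard)
    (A : Set T) (hA : A.Finite) (B : Set T)
    (hBchain : ∀ x ∈ B, ∀ y ∈ B, t.le x y ∨ t.le y x)
    (hBmeets : ∀ n, (B ∩ t.level n).Nonempty) :
    ∃ g : T ≃ T, (∀ x y : T, t.le x y ↔ t.le (g x) (g y)) ∧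
      (∀ a ∈ A, g a = a) ∧ (⇑g) '' B ≠ B := by
  classical
  open TAux in
  obtain ⟨e, he⟩ := Countable.exists_injective_nat T
  -- bound for A
  set M := hA.toFinset.sup (TAux.lev t) with hM
  have hAlev : ∀ a ∈ A, TAux.lev t a ≤ M :=
    fun a ha => Finset.le_sup (hA.mem_toFinset.mpr ha)
  obtain ⟨n, hnM, x, hx, hx2⟩ := hbr M
  obtain ⟨b, hbB, hbl⟩ := hBmeets n
  obtain ⟨c, hcB, hcl⟩ := hBmeets (n + 1)
  have hblev : TAux.lev t b = n := hbl
  have hclev : TAux.lev t c = n + 1 := hcl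
  have hlebc : t.le b c := by
    rcases hBchain b hbB c hcB with h | h
    · exact h
    · have := TAux.lev_mono t h
      omega
  have hbc : t.ImmSucc b c := by
    refine ⟨⟨hlebc, fun hh => by rw [hh] at hblev; omega⟩, ?_⟩
    rintro ⟨z, h1, h2⟩
    have := TAux.lev_strict t h1
    have := TAux.lev_strict t h2
    omega
  -- b has at least 2 children
  have hb2 : 2 ≤ {z | t.ImmSucc b z}.ncard := by
    have := hbal n x hx b hbl
    omega
  obtain ⟨u, hu, v, hv, huv⟩ :=
    (Set.one_lt_ncard (TAux.children_finite t hf b)).mp (by omega)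
  set c' := if u = c then v else u with hc'def
  have hc'1 : t.ImmSucc b c' := by
    rw [hc'def]; split <;> assumption
  have hne : c' ≠ c := by
    rw [hc'def]; split
    · rename_i hu'; rw [← hu']; exact huv.symm
    · assumption
  have hc'lev : TAux.lev t c' = n + 1 := by
    rw [TAux.lev_of_immSucc t hc'1, hblev]
  have hlevcc : TAux.lev t c = TAux.lev t c' := by omega
  have hnc : ¬ t.le c c' := fun h => hne (TAux.eq_of_le_lev t h (by omega)).symm
  have hnc' : ¬ t.le c' c := fun h => hne (TAux.eq_of_le_lev t h (by omega))
  have hccne : c ≠ c' := fun h => hne h.symm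
  have hsib : ∀ w, t.lt w c → t.le w c' := by
    intro w hw
    have h1 : t.le w b := by
      have := TAux.lev_strict t hw
      have := TAux.lev_of_immSucc t hbc
      exact TAux.le_of_comp_lev t hw.1 hbc.1.1 (by omega)
    exact t.trans _ _ _ h1 hc'1.1.1
  have hsib' : ∀ w, t.lt w c' → t.le w c := by
    intro w hw
    have h1 : t.le w b := by
      have := TAux.lev_strict t hw
      have := TAux.lev_of_immSucc t hc'1
      exact TAux.le_of_comp_lev t hw.1 hc'1.1.1 (by omega)
    exact t.trans _ _ _ h1 hbc.1.1
  have hm := TAux.master t hbal hf e he c c' hlevcc hccne hnc hnc'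
  have hinv : Function.Involutive (TAux.F t hbal hf e c c') := fun z => (hm z).2.2.2.1
  refine ⟨hinv.toPerm _, ?_, ?_, ?_⟩
  · simp only [Function.Involutive.coe_toPerm]
    intro x' y'
    constructor
    · exact fun h => TAux.F_mono t hbal hf e he c c' hlevcc hccne hnc hnc' hsib hsib' y' x' h
    · intro h
      have h2 := TAux.F_mono t hbal hf e he c c' hlevcc hccne hnc hnc' hsib hsib' _ _ h
      rwa [hinv x', hinv y'] at h2
  · simp only [Function.Involutive.coe_toPerm]
    intro a ha
    have hla : TAux.lev t a ≤ M := hAlev a ha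
    have h1 : ¬ t.le c a := fun h => by
      have := TAux.lev_mono t h; omega
    have h2 : ¬ t.le c' a := fun h => by
      have := TAux.lev_mono t h; omega
    exact TAux.F_fix t hbal hf e h1 h2
  · simp only [Function.Involutive.coe_toPerm]
    intro heq
    have hFc : TAux.F t hbal hf e c c' c = c' := TAux.F_eq_c t hbal hf e c c'
    have hc'B : c' ∈ B := by
      rw [← heq]
      exact ⟨c, hcB, hFc⟩
    rcases hBchain c hcB c' hc'B with h | h
    · exact hnc h
    · exact hnc' h
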